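/- Let A, B ∈ ℝ^{n×n} be positive semidefinite, let T be an optimal transport matrix from A to B, and for t ∈ [0,1) define the McCann interpolant Γ_t := ((1−t)·I + t·T)·A·((1−t)·I + t·T)ᵀ. Then for every t ∈ [0,1): range(Γ_t) ∩ ker(A) = {0} (the A-Schur complement of Γ_t vanishes) and rank(Γ_t) = rank(A). -/

import Mathlib

open Matrix

/-- The positive semidefinite square root of a psd matrix (junk value `0` otherwise). -/
noncomputable def psdSqrt {n : ℕ} (M : Matrix (Fin n) (Fin n) ℝ) : Matrix (Fin n) (Fin n) ℝ :=
  letI := Classical.propDecidable M.PosSemidef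
  if h : M.PosSemidef then
    (h.1.eigenvectorUnitary : Matrix (Fin n) (Fin n) ℝ) * diagonal (Real.sqrt ∘ h.1.eigenvalues) *
      (star h.1.eigenvectorUnitary : Matrix (Fin n) (Fin n) ℝ) else 0

noncomputable def Matrix.PosSemidef.sqrt {n : ℕ} {M : Matrix (Fin n) (Fin n) ℝ}
    (h : M.PosSemidef) : Matrix (Fin n) (Fin n) ℝ :=
  (h.1.eigenvectorUnitary : Matrix (Fin n) (Fin n) ℝ) * diagonal (Real.sqrt ∘ h.1.eigenvalues) *
    (star h.1.eigenvectorUnitary : Matrix (Fin n) (Fin n) ℝ)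

/-- `trace √(√A·B·√A)`. -/
noncomputable def sqrtTr {n : ℕ} (A B : Matrix (Fin n) (Fin n) ℝ) : ℝ :=
  (psdSqrt (psdSqrt A * B * psdSqrt A)).trace

/-- `T` is an optimal transport matrix from `A` to `B`. -/
def IsOT {n : ℕ} (A B T : Matrix (Fin n) (Fin n) ℝ) : Prop :=
  T * A * Tᵀ = B ∧ (A * T).trace = sqrtTr A B

/-- Squared Bures–Wasserstein distance. -/
noncomputable def W2sq {n : ℕ} (A B : Matrix (Fin n) (Fin n) ℝ) : ℝ :=
  A.trace + B.trace - 2 * sqrtTr A B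


lemma real_conjT {n : ℕ} (M : Matrix (Fin n) (Fin n) ℝ) : Mᴴ = Mᵀ := by
  ext i j; simp [conjTranspose_apply]

/-- If `Q Qᴴ = R²` with `R` psd and `tr Q = tr R`, then `Q = R`. -/
lemma eq_of_trace_eq {n : ℕ} {Q R : Matrix (Fin n) (Fin n) ℝ} (hR : R.PosSemidef)
    (hQR : Q * Qᴴ = R * R) (htr : Q.trace = R.trace) : Q = R := by
  set U : Matrix (Fin n) (Fin n) ℝ := (hR.1.eigenvectorUnitary : Matrix (Fin n) (Fin n) ℝ)
    with hUdef
  set lam := hR.1.eigenvalues with hlamdef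
  have hUU : U * star U = 1 := (Matrix.mem_unitaryGroup_iff).mp hR.1.eigenvectorUnitary.2
  have hUU' : star U * U = 1 := (Matrix.mem_unitaryGroup_iff').mp hR.1.eigenvectorUnitary.2
  have hdiag : (diagonal (RCLike.ofReal ∘ lam) : Matrix (Fin n) (Fin n) ℝ) = diagonal lam := by
    rfl
  have hspec : R = U * diagonal lam * star U := by
    rw [← hdiag]; exact hR.1.spectral_theorem
  have hRU : star U * R * U = diagonal lam := by
    rw [hspec]
    calc star U * (U * diagonal lam * star U) * U
        = (star U * U) * diagonal lam * (star U * U) := by noncomm_ring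
      _ = diagonal lam := by rw [hUU']; simp
  set N := star U * Q * U with hNdef
  have hQN : Q = U * N * star U := by
    rw [hNdef]
    calc Q = (U * star U) * Q * (U * star U) := by rw [hUU]; simp
      _ = U * (star U * Q * U) * star U := by noncomm_ring
  have hNH : Nᴴ = star U * Qᴴ * U := by
    simp only [hNdef, conjTranspose_mul, star_eq_conjTranspose, conjTranspose_conjTranspose]
    noncomm_ring
  have hNN : N * Nᴴ = diagonal (fun i => lam i ^ 2) := by
    calc N * Nᴴ = star U * Q * (U * star U) * Qᴴ * U := by rw [hNdef, hNH]; noncomm_ring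
      _ = star U * (Q * Qᴴ) * U := by rw [hUU]; noncomm_ring
      _ = star U * (R * R) * U := by rw [hQR]
      _ = diagonal lam * diagonal lam := by
          rw [← hRU]
          have h2 : star U * R * U * (star U * R * U) = star U * R * (U * star U) * R * U := by
            noncomm_ring
          rw [h2, hUU]
          noncomm_ring
      _ = diagonal (fun i => lam i ^ 2) := by rw [diagonal_mul_diagonal]; simp [pow_two]
  have htrR : R.trace = ∑ i, lam i := by
    rw [hspec, Matrix.trace_mul_cycle, hUU', Matrix.one_mul, trace_diagonal]
  have htrN : N.trace = ∑ i, lam i := by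
    rw [hNdef, Matrix.trace_mul_cycle, hUU, Matrix.one_mul, htr, htrR]
  have hrow : ∀ i, ∑ j, (N i j) ^ 2 = lam i ^ 2 := by
    intro i
    have h := congrFun (congrFun hNN i) i
    simpa [Matrix.mul_apply, conjTranspose_apply, pow_two] using h
  have hle : ∀ i, N i i ≤ lam i := by
    intro i
    have h1 : (N i i) ^ 2 ≤ lam i ^ 2 := by
      rw [← hrow i]
      exact Finset.single_le_sum (f := fun j => (N i j) ^ 2) (fun j _ => sq_nonneg _) (Finset.mem_univ i)
    nlinarith [hR.eigenvalues_nonneg i]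
  have hdiagN : ∀ i, N i i = lam i := by
    have hsum : ∑ i, N i i = ∑ i, lam i := htrN
    intro i
    exact (Finset.sum_eq_sum_iff_of_le (fun i _ => hle i)).mp hsum i (Finset.mem_univ i)
  have hoff : N = diagonal lam := by
    ext i j
    by_cases h : i = j
    · subst h; simp [hdiagN i]
    · rw [diagonal_apply_ne _ h]
      have h0 : ∑ k ∈ Finset.univ.erase i, (N i k) ^ 2 = 0 := by
        have hins : (N i i) ^ 2 + ∑ k ∈ Finset.univ.erase i, (N i k) ^ 2 = ∑ k, (N i k) ^ 2 :=
          Finset.add_sum_erase Finset.univ (fun k => (N i k) ^ 2) (Finset.mem_univ i)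
        rw [hrow i, hdiagN i] at hins
        linarith
      have hz : (N i j) ^ 2 = 0 := by
        refine (Finset.sum_eq_zero_iff_of_nonneg (fun k _ => sq_nonneg _)).mp h0 j ?_
        simp [Finset.mem_erase, Ne.symm h]
      exact pow_eq_zero_iff two_ne_zero |>.mp hz
  rw [hQN, hoff, ← hspec]

lemma Matrix.PosSemidef.sqrt_mul_self {n : ℕ} {M : Matrix (Fin n) (Fin n) ℝ}
    (h : M.PosSemidef) : h.sqrt * h.sqrt = M := by
  have hUU' : (star (h.1.eigenvectorUnitary : Matrix (Fin n) (Fin n) ℝ)) *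
      (h.1.eigenvectorUnitary : Matrix (Fin n) (Fin n) ℝ) = 1 :=
    (Matrix.mem_unitaryGroup_iff').mp h.1.eigenvectorUnitary.2
  have hdiag : (diagonal (RCLike.ofReal ∘ h.1.eigenvalues) : Matrix (Fin n) (Fin n) ℝ) =
      diagonal h.1.eigenvalues := rfl
  have hspec : M = (h.1.eigenvectorUnitary : Matrix (Fin n) (Fin n) ℝ) *
      diagonal h.1.eigenvalues * (star h.1.eigenvectorUnitary : Matrix (Fin n) (Fin n) ℝ) := by
    rw [← hdiag]; exact h.1.spectral_theorem
  have hD : (fun i => (Real.sqrt ∘ h.1.eigenvalues) i * (Real.sqrt ∘ h.1.eigenvalues) i) =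
      h.1.eigenvalues := by
    funext i; exact Real.mul_self_sqrt (h.eigenvalues_nonneg i)
  unfold Matrix.PosSemidef.sqrt
  set U : Matrix (Fin n) (Fin n) ℝ := (h.1.eigenvectorUnitary : Matrix (Fin n) (Fin n) ℝ)
  set D := diagonal (Real.sqrt ∘ h.1.eigenvalues) with hDdef
  calc U * D * star U * (U * D * star U) = U * D * (star U * U) * D * star U := by noncomm_ring
    _ = U * (D * D) * star U := by rw [hUU']; noncomm_ring
    _ = M := by rw [hDdef, diagonal_mul_diagonal, hD, ← hspec]

lemma Matrix.PosSemidef.posSemidef_sqrt {n : ℕ} {M : Matrix (Fin n) (Fin n) ℝ}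
    (h : M.PosSemidef) : h.sqrt.PosSemidef := by
  unfold Matrix.PosSemidef.sqrt
  rw [star_eq_conjTranspose]
  exact (posSemidef_diagonal_iff.mpr (fun i => Real.sqrt_nonneg (h.1.eigenvalues i))).mul_mul_conjTranspose_same _

lemma psdSqrt_eq {n : ℕ} {M : Matrix (Fin n) (Fin n) ℝ} (h : M.PosSemidef) :
    psdSqrt M = h.sqrt := by
  simp only [psdSqrt]
  exact dif_pos h

lemma isOT_psd {n : ℕ} {A B T : Matrix (Fin n) (Fin n) ℝ} (hA : A.PosSemidef)
    (hB : B.PosSemidef) (hT : IsOT A B T) :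
    (hA.sqrt * T * hA.sqrt).PosSemidef := by
  set a := hA.sqrt with hadef
  have ha : a.PosSemidef := hA.posSemidef_sqrt
  have haH : aᴴ = a := ha.1
  have haa : a * a = A := hA.sqrt_mul_self
  have hC : (a * B * a).PosSemidef := by
    have h := hB.mul_mul_conjTranspose_same a
    rwa [haH] at h
  have hQQ : (a * T * a) * (a * T * a)ᴴ = hC.sqrt * hC.sqrt := by
    rw [hC.sqrt_mul_self]
    have h1 : (a * T * a)ᴴ = a * Tᴴ * a := by
      simp only [conjTranspose_mul, haH]
      noncomm_ring
    rw [h1, ← hT.1, real_conjT, ← haa]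
    noncomm_ring
  have htr : (a * T * a).trace = (hC.sqrt).trace := by
    have h2 : (a * T * a).trace = (A * T).trace := by
      rw [Matrix.trace_mul_cycle, haa]
    rw [h2, hT.2, sqrtTr, psdSqrt_eq hA, ← hadef, psdSqrt_eq hC]
  have h4 := eq_of_trace_eq hC.posSemidef_sqrt hQQ htr
  rw [h4]
  exact hC.posSemidef_sqrt

/-- Along the McCann interpolant
`Γ_t = ((1−t)·I + t·T)·A·((1−t)·I + t·T)ᵀ` of an OT matrix `T` from `A` to `B`,
for every `t ∈ [0,1)` the A-Schur complement vanishes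
(`range Γ_t ∩ ker A = {0}`) and `rank Γ_t = rank A`. -/
theorem stmt4 {n : ℕ} (A B T : Matrix (Fin n) (Fin n) ℝ)
    (hA : A.PosSemidef) (hB : B.PosSemidef) (hT : IsOT A B T)
    (t : ℝ) (ht0 : 0 ≤ t) (ht1 : t < 1)
    (Γ : Matrix (Fin n) (Fin n) ℝ)
    (hΓ : Γ = ((1 - t) • (1 : Matrix (Fin n) (Fin n) ℝ) + t • T) * A *
        ((1 - t) • (1 : Matrix (Fin n) (Fin n) ℝ) + t • T)ᵀ) :
    LinearMap.range Γ.mulVecLin ⊓ LinearMap.ker A.mulVecLin = ⊥ ∧ Γ.rank = A.rank := by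
  set a := hA.sqrt with hadef
  have ha : a.PosSemidef := hA.posSemidef_sqrt
  have haH : aᴴ = a := ha.1
  have haT : aᵀ = a := by rw [← real_conjT]; exact haH
  have haa : a * a = A := hA.sqrt_mul_self
  have hQ : (a * T * a).PosSemidef := isOT_psd hA hB hT
  set S : Matrix (Fin n) (Fin n) ℝ := (1 - t) • 1 + t • T with hSdef
  set M := S * a with hMdef
  have hΓM : Γ = M * Mᵀ := by
    rw [hΓ, hMdef, transpose_mul, haT, ← haa]
    noncomm_ring
  have haSa : a * S * a = (1 - t) • A + t • (a * T * a) := by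
    rw [hSdef, ← haa]
    simp only [Matrix.mul_add, Matrix.add_mul, Matrix.mul_smul, Matrix.smul_mul,
      Matrix.mul_one, Matrix.mul_assoc]
  -- core kernel fact
  have key : ∀ w : Fin n → ℝ, (a * S * a) *ᵥ w = 0 → a *ᵥ w = 0 := by
    intro w hw
    have h2 : w ⬝ᵥ ((a * S * a) *ᵥ w) = 0 := by rw [hw, dotProduct_zero]
    rw [haSa] at h2
    have hAq : 0 ≤ w ⬝ᵥ (A *ᵥ w) := by simpa using hA.dotProduct_mulVec_nonneg w
    have hQq : 0 ≤ w ⬝ᵥ ((a * T * a) *ᵥ w) := by simpa using hQ.dotProduct_mulVec_nonneg w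
    have hexp : (1 - t) * (w ⬝ᵥ (A *ᵥ w)) + t * (w ⬝ᵥ ((a * T * a) *ᵥ w)) = 0 := by
      rw [← h2]
      simp [add_mulVec, smul_mulVec, dotProduct_add, dotProduct_smul, smul_eq_mul]
    have hA0 : w ⬝ᵥ (A *ᵥ w) = 0 := by nlinarith
    have hAv : A *ᵥ w = 0 := by
      have h5 := hA.dotProduct_mulVec_zero_iff w
      simp only [star_trivial] at h5
      exact h5.mp hA0
    have h3 : (aᴴ * a) *ᵥ w = 0 := by rw [haH, haa]; exact hAv
    exact (conjTranspose_mul_self_mulVec_eq_zero a w).mp h3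
  have hker : LinearMap.ker M.mulVecLin = LinearMap.ker a.mulVecLin := by
    ext w
    simp only [LinearMap.mem_ker, mulVecLin_apply]
    constructor
    · intro hw
      apply key
      have h6 : (a * S * a) *ᵥ w = a *ᵥ (M *ᵥ w) := by
        rw [hMdef, mulVec_mulVec, Matrix.mul_assoc]
      rw [h6, hw, mulVec_zero]
    · intro hw
      rw [hMdef, ← mulVec_mulVec, hw, mulVec_zero]
  have hrankΓ : Γ.rank = M.rank := by
    rw [hΓM, ← real_conjT, rank_self_mul_conjTranspose]
  have hrankA : A.rank = a.rank := by
    rw [← haa, show a * a = aᴴ * a by rw [haH], rank_conjTranspose_mul_self]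
  have hrankMa : M.rank = a.rank := by
    have h1 := M.mulVecLin.finrank_range_add_finrank_ker
    have h2 := a.mulVecLin.finrank_range_add_finrank_ker
    rw [hker] at h1
    have e1 : M.rank = Module.finrank ℝ (LinearMap.range M.mulVecLin) := rfl
    have e2 : a.rank = Module.finrank ℝ (LinearMap.range a.mulVecLin) := rfl
    omega
  refine ⟨?_, by rw [hrankΓ, hrankA, hrankMa]⟩
  rw [Submodule.eq_bot_iff]
  rintro x hx
  obtain ⟨⟨y, hy⟩, hxker⟩ := Submodule.mem_inf.mp hx
  have hxM : x = M *ᵥ (Mᵀ *ᵥ y) := by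
    rw [← hy, hΓM]
    simp only [mulVecLin_apply]
    rw [← mulVec_mulVec]
  have hAx : A *ᵥ x = 0 := hxker
  have hax : a *ᵥ x = 0 := by
    have h3 : (aᴴ * a) *ᵥ x = 0 := by rw [haH, haa]; exact hAx
    exact (conjTranspose_mul_self_mulVec_eq_zero a x).mp h3
  obtain ⟨w, hxM⟩ : ∃ w, x = M *ᵥ w := ⟨Mᵀ *ᵥ y, hxM⟩
  have h4 : (a * S * a) *ᵥ w = 0 := by
    have h6 : (a * S * a) *ᵥ w = a *ᵥ (M *ᵥ w) := by
      rw [hMdef, mulVec_mulVec, Matrix.mul_assoc]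
    rw [h6, ← hxM, hax]
  have h5 : a *ᵥ w = 0 := key w h4
  rw [hxM, hMdef, ← mulVec_mulVec, h5, mulVec_zero]
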